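/- Let Y be a finite group, G a nonabelian simple subgroup with trivial core in Y, and suppose N is a normal subgroup of Y with N ∩ G = 1 and G ≤ C_Y(N), so that N × G ≤ Y and G is characteristic in N × G (N abelian). Then N × G is not normal in Y. -/

import Mathlib

open scoped Pointwise
open scoped commutatorElement

private lemma comm_elim {Y : Type*} [Group Y] (n g y : Y)
    (h1 : Commute n g) (h2 : Commute n y) : ⁅n * g, y⁆ = ⁅g, y⁆ := by
  have h3 : Commute n (g * y * g⁻¹ * y⁻¹) :=
    ((h1.mul_right h2).mul_right h1.inv_right).mul_right h2.inv_right
  simp only [commutatorElement_def, mul_inv_rev, ← mul_assoc]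
  rw [mul_assoc (n * g * y * g⁻¹) n⁻¹ y⁻¹, (h2.inv_left.inv_right).eq, ← mul_assoc]
  rw [show n * g * y * g⁻¹ * y⁻¹ * n⁻¹ = n * (g * y * g⁻¹ * y⁻¹) * n⁻¹ by
    simp only [mul_assoc]]
  rw [h3.eq, mul_assoc]
  simp

/-- Let `G` be a nonabelian simple subgroup with trivial core in the finite
group `Y`, and `N ⊴ Y` abelian with `N ∩ G = 1` and `G ≤ C_Y(N)`.  Then the
internal direct product `N × G = ⟨N, G⟩` is not normal in `Y`. -/
theorem stmt_16 {Y : Type*} [Group Y] [Finite Y] (G N : Subgroup Y)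
    (hsimple : IsSimpleGroup G) (hnonab : ¬ ∀ x y : G, x * y = y * x)
    (hcore : G.normalCore = ⊥)
    (hN : N.Normal) (hNab : ∀ x ∈ N, ∀ y ∈ N, x * y = y * x)
    (hNG : N ⊓ G = ⊥) (hGC : G ≤ Subgroup.centralizer (N : Set Y)) :
    ¬ (N ⊔ G).Normal := by
  intro h
  -- everything in N ⊔ G centralizes N
  have hcent : N ⊔ G ≤ Subgroup.centralizer (N : Set Y) := by
    refine sup_le ?_ hGC
    intro n hn
    rw [Subgroup.mem_centralizer_iff]
    intro m hm
    exact hNab m hm n hn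
  have hcomm : ∀ n ∈ N, ∀ x ∈ N ⊔ G, Commute n x := by
    intro n hn x hx
    exact (Subgroup.mem_centralizer_iff.mp (hcent hx) n hn)
  -- Step 1: ⁅N ⊔ G, N ⊔ G⁆ = G
  have hkey : ⁅N ⊔ G, N ⊔ G⁆ = G := by
    apply le_antisymm
    · rw [Subgroup.commutator_le]
      intro x hx y hy
      have hx' : x ∈ (N : Set Y) * (G : Set Y) := by
        rw [← Subgroup.normal_mul]; exact hx
      have hy' : y ∈ (N : Set Y) * (G : Set Y) := by
        rw [← Subgroup.normal_mul]; exact hy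
      obtain ⟨n1, hn1, g1, hg1, rfl⟩ := hx'
      obtain ⟨n2, hn2, g2, hg2, rfl⟩ := hy'
      have hg1' : g1 ∈ N ⊔ G := Subgroup.mem_sup_right hg1
      have hg2' : g2 ∈ N ⊔ G := Subgroup.mem_sup_right hg2
      have e1 : ⁅n1 * g1, n2 * g2⁆ = ⁅g1, n2 * g2⁆ :=
        comm_elim _ _ _ (hcomm n1 hn1 g1 hg1')
          (hcomm n1 hn1 _ (mul_mem (Subgroup.mem_sup_left hn2) hg2'))
      have e2 : ⁅g1, n2 * g2⁆ = ⁅g1, g2⁆ := by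
        have := comm_elim n2 g2 g1 (hcomm n2 hn2 g2 hg2') (hcomm n2 hn2 g1 hg1')
        rw [← commutatorElement_inv, this, commutatorElement_inv]
      rw [e1, e2, commutatorElement_def]
      exact G.mul_mem (G.mul_mem (G.mul_mem hg1 hg2) (G.inv_mem hg1)) (G.inv_mem hg2)
    · -- G = ⁅G, G⁆ since G is simple nonabelian
      have hmt : Subgroup.map G.subtype ⊤ = G := by
        rw [← MonoidHom.range_eq_map, Subgroup.range_subtype]
      have hGG : ⁅G, G⁆ = G := by
        have hmap : Subgroup.map G.subtype ⁅(⊤ : Subgroup G), ⊤⁆ = ⁅G, G⁆ := by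
          rw [Subgroup.map_commutator, hmt]
        have htop : ⁅(⊤ : Subgroup G), (⊤ : Subgroup G)⁆ = ⊤ := by
          rcases hsimple.eq_bot_or_eq_top_of_normal ⁅(⊤ : Subgroup G), (⊤ : Subgroup G)⁆
            (Subgroup.commutator_normal _ _) with hb | ht
          · exfalso
            apply hnonab
            intro x y
            have hmem : ⁅x, y⁆ ∈ ⁅(⊤ : Subgroup G), (⊤ : Subgroup G)⁆ :=
              Subgroup.commutator_mem_commutator (Subgroup.mem_top x) (Subgroup.mem_top y)
            rw [hb, Subgroup.mem_bot] at hmem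
            exact commutatorElement_eq_one_iff_mul_comm.mp hmem
          · exact ht
        rw [← hmap, htop]
        exact hmt
      exact le_trans (le_of_eq hGG.symm)
        (Subgroup.commutator_mono le_sup_right le_sup_right)
  -- Step 2: G is normal in Y, contradicting trivial normal core
  have hGnormal : G.Normal := by
    rw [← hkey]
    exact Subgroup.commutator_normal _ _
  have hGbot : (⊥ : Subgroup Y) = G := by
    rw [← hcore]
    exact @Subgroup.normalCore_eq_self _ _ G hGnormal
  subst hGbot
  apply hnonab
  intro x y
  exact Subsingleton.elim _ _
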